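/- Let M be a matroid with rank function r on a finite ground set 𝒳, ≻ a strict linear order on 𝒳, q a natural number, and G ⊆ 𝒳 with |G| ≤ q. Every choice rule C on 𝒳 satisfying guaranteed enrollment (A ∩ G ⊆ C(A) for all A), maximal utilization of reservations (for all A and x ∈ A \ C(A): if |C(A)| < q then r(C(A) ∪ {x}) = r(C(A)), and if |C(A)| = q then for every y ∈ C(A) \ G, r((C(A) \ {y}) ∪ {x}) ≤ r(C(A))), no justified envy under reserves (for all A, x ∈ C(A) \ G, y ∈ A \ C(A): y ≻ x implies r((C(A) \ {x}) ∪ {y}) < r(C(A))), and non-wastefulness (|C(A)| = min(|A|, q) for all A) satisfies path independence and size monotonicity. -/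

import Mathlib

/-- A matroid on the finite ground set `α`, given by its independent sets. -/
structure FinMatroid (α : Type*) [DecidableEq α] where
  Indep : Finset α → Prop
  indep_empty : Indep ∅
  indep_subset : ∀ ⦃A B : Finset α⦄, Indep B → A ⊆ B → Indep A
  indep_exchange : ∀ ⦃A B : Finset α⦄, Indep A → Indep B → A.card < B.card →
    ∃ x ∈ B, x ∉ A ∧ Indep (insert x A)

open Classical in
/-- The rank of a set: the common cardinality of its maximal independent
subsets. -/
noncomputable def FinMatroid.rank {α : Type*} [DecidableEq α]
    (M : FinMatroid α) (X : Finset α) : ℕ :=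
  (X.powerset.filter fun A => M.Indep A).sup Finset.card

/-- `Y` is a basis of `X`: a maximal independent subset of `X`. -/
def FinMatroid.IsBasisOf {α : Type*} [DecidableEq α]
    (M : FinMatroid α) (Y X : Finset α) : Prop :=
  Y ⊆ X ∧ M.Indep Y ∧ ∀ Z : Finset α, Z ⊆ X → M.Indep Z → Y ⊆ Z → Z = Y

section RankLemmas

variable {α : Type*} [DecidableEq α] {M : FinMatroid α}

open Finset Classical

lemma FM_card_le_rank {I X : Finset α} (hI : M.Indep I) (hIX : I ⊆ X) :
    I.card ≤ M.rank X := by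
  apply Finset.le_sup
  simp [Finset.mem_filter, Finset.mem_powerset, hIX, hI]

lemma FM_exists_rank_witness (X : Finset α) :
    ∃ I, I ⊆ X ∧ M.Indep I ∧ I.card = M.rank X := by
  classical
  obtain ⟨I, hmem, hsup⟩ := Finset.exists_mem_eq_sup
    (X.powerset.filter fun A => M.Indep A)
    ⟨∅, by simp [Finset.mem_filter, M.indep_empty]⟩ Finset.card
  simp only [Finset.mem_filter, Finset.mem_powerset] at hmem
  exact ⟨I, hmem.1, hmem.2, hsup.symm⟩

lemma FM_rank_mono {X Y : Finset α} (h : X ⊆ Y) : M.rank X ≤ M.rank Y := by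
  apply Finset.sup_mono
  apply Finset.filter_subset_filter
  exact Finset.powerset_mono.2 h

lemma FM_rank_insert_le (X : Finset α) (x : α) :
    M.rank (insert x X) ≤ M.rank X + 1 := by
  obtain ⟨I, hIX, hI, hcard⟩ := FM_exists_rank_witness (M := M) (insert x X)
  have h1 : I.erase x ⊆ X := by
    intro z hz
    obtain ⟨hzx, hzI⟩ := Finset.mem_erase.1 hz
    rcases Finset.mem_insert.1 (hIX hzI) with h | h
    · exact absurd h hzx
    · exact h
  have h2 : M.Indep (I.erase x) := M.indep_subset hI (Finset.erase_subset _ _)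
  have h3 : (I.erase x).card ≤ M.rank X := FM_card_le_rank h2 h1
  have h4 : I.card ≤ (I.erase x).card + 1 := by
    by_cases hx : x ∈ I
    · rw [Finset.card_erase_of_mem hx]; omega
    · rw [Finset.erase_eq_of_notMem hx]; omega
  omega

lemma FM_le_rank_insert (X : Finset α) (x : α) : M.rank X ≤ M.rank (insert x X) :=
  FM_rank_mono (Finset.subset_insert _ _)

end RankLemmas

def Spn {α : Type*} [DecidableEq α] (M : FinMatroid α) (x : α) (X : Finset α) : Prop :=
  M.rank (insert x X) = M.rank X

section SpnLemmas

variable {α : Type*} [DecidableEq α] {M : FinMatroid α}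

open Finset

lemma FM_sp_of_mem {x : α} {X : Finset α} (h : x ∈ X) : Spn M x X := by
  unfold Spn; rw [Finset.insert_eq_self.2 h]

lemma FM_rank_insert_of_not_sp {x : α} {X : Finset α} (h : ¬ Spn M x X) :
    M.rank (insert x X) = M.rank X + 1 := by
  have h1 := FM_rank_insert_le (M := M) X x
  have h2 := FM_le_rank_insert (M := M) X x
  unfold Spn at h; omega

lemma FM_augment {I X : Finset α} (hI : M.Indep I) (hIX : I ⊆ X)
    (hlt : I.card < M.rank X) : ∃ x ∈ X, x ∉ I ∧ M.Indep (insert x I) := by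
  obtain ⟨J, hJX, hJ, hJcard⟩ := FM_exists_rank_witness (M := M) X
  obtain ⟨x, hxJ, hxI, hind⟩ := M.indep_exchange hI hJ (by omega)
  exact ⟨x, hJX hxJ, hxI, hind⟩

lemma FM_basis_ext {I X : Finset α} (hI : M.Indep I) (hIX : I ⊆ X) :
    ∃ B, I ⊆ B ∧ B ⊆ X ∧ M.Indep B ∧ B.card = M.rank X := by
  have hle : I.card ≤ M.rank X := FM_card_le_rank hI hIX
  obtain ⟨n, hn⟩ : ∃ n, M.rank X = I.card + n := ⟨M.rank X - I.card, by omega⟩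
  clear hle
  induction n generalizing I with
  | zero => exact ⟨I, subset_rfl, hIX, hI, by omega⟩
  | succ n ih =>
    obtain ⟨x, hxX, hxI, hind⟩ := FM_augment hI hIX (by omega)
    obtain ⟨B, hB1, hB2, hB3, hB4⟩ := ih hind (Finset.insert_subset hxX hIX)
      (by rw [Finset.card_insert_of_notMem hxI]; omega)
    exact ⟨B, (Finset.subset_insert _ _).trans hB1, hB2, hB3, hB4⟩

lemma FM_sp_mono {x : α} {X Y : Finset α} (hXY : X ⊆ Y) (h : Spn M x X) :
    Spn M x Y := by
  by_cases hxY : x ∈ Y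
  · exact FM_sp_of_mem hxY
  by_contra hns
  have hxX : x ∉ X := fun hx => hxY (hXY hx)
  have hY1 : M.rank (insert x Y) = M.rank Y + 1 := FM_rank_insert_of_not_sp hns
  obtain ⟨BX, _, hBXX, hBXind, hBXcard⟩ := FM_basis_ext (M := M) M.indep_empty
    (Finset.empty_subset X)
  obtain ⟨B, hBXB, hBY, hBind, hBcard⟩ := FM_basis_ext hBXind (hBXX.trans hXY)
  obtain ⟨e, heY, heB, heind⟩ := FM_augment (X := insert x Y) hBind
    (hBY.trans (Finset.subset_insert _ _)) (by omega)
  rcases Finset.mem_insert.1 heY with he | he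
  · -- e = x : insert x B indep
    rw [he] at heind heB
    have hind2 : M.Indep (insert x BX) := M.indep_subset heind
      (Finset.insert_subset_insert _ hBXB)
    have hsub2 : insert x BX ⊆ insert x X := Finset.insert_subset_insert _ hBXX
    have hcard2 : (insert x BX).card = M.rank X + 1 := by
      rw [Finset.card_insert_of_notMem (fun hx => hxX (hBXX hx))]; omega
    have := FM_card_le_rank hind2 hsub2
    rw [hcard2] at this
    unfold Spn at h
    omega
  · have : (insert e B).card ≤ M.rank Y :=
      FM_card_le_rank heind (Finset.insert_subset he hBY)
    rw [Finset.card_insert_of_notMem heB] at this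
    omega

lemma FM_rank_union_eq_of_sp {Z X : Finset α} (h : ∀ z ∈ Z, Spn M z X) :
    M.rank (Z ∪ X) = M.rank X := by
  classical
  induction Z using Finset.induction with
  | empty => rw [Finset.empty_union]
  | @insert a Z ha ih =>
    rw [Finset.insert_union]
    have h1 : Spn M a (Z ∪ X) :=
      FM_sp_mono Finset.subset_union_right (h a (Finset.mem_insert_self _ _))
    unfold Spn at h1
    rw [h1]
    exact ih (fun z hz => h z (Finset.mem_insert_of_mem hz))

lemma FM_rank_le_of_sp {Z X : Finset α} (h : ∀ z ∈ Z, Spn M z X) :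
    M.rank Z ≤ M.rank X := by
  calc M.rank Z ≤ M.rank (Z ∪ X) := FM_rank_mono Finset.subset_union_left
  _ = M.rank X := FM_rank_union_eq_of_sp h

lemma FM_sp_trans {x : α} {XA XD : Finset α} (hAll : ∀ s ∈ XA, Spn M s XD)
    (h : Spn M x XA) : Spn M x XD := by
  have h1 : M.rank (XA ∪ XD) = M.rank XD := FM_rank_union_eq_of_sp hAll
  have h2 : Spn M x (XA ∪ XD) := FM_sp_mono Finset.subset_union_left h
  unfold Spn at h2 ⊢
  have h3 : M.rank (insert x XD) ≤ M.rank (insert x (XA ∪ XD)) :=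
    FM_rank_mono (Finset.insert_subset_insert _ Finset.subset_union_right)
  have h4 := FM_le_rank_insert (M := M) XD x
  omega

lemma FM_rank_union_le_card (Z X : Finset α) :
    M.rank (Z ∪ X) ≤ M.rank X + Z.card := by
  classical
  induction Z using Finset.induction with
  | empty => simp
  | @insert a Z ha ih =>
    rw [Finset.insert_union, Finset.card_insert_of_notMem ha]
    have := FM_rank_insert_le (M := M) (Z ∪ X) a
    omega

lemma FM_card_rank_sub {X Y : Finset α} (h : X ⊆ Y) :
    X.card + M.rank Y ≤ Y.card + M.rank X := by
  have h1 : Y = (Y \ X) ∪ X := by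
    rw [Finset.sdiff_union_self_eq_union, Finset.union_eq_left.2 h]
  have h2 : M.rank Y ≤ M.rank X + (Y \ X).card := by
    conv_lhs => rw [h1]
    exact FM_rank_union_le_card _ _
  have h3 : (Y \ X).card + X.card = Y.card := Finset.card_sdiff_add_card_eq_card h
  omega

lemma FM_erase_rank_of_not_sp {y : α} {X : Finset α} (hy : y ∈ X)
    (h : ¬ Spn M y (X.erase y)) : M.rank (X.erase y) + 1 = M.rank X := by
  have h1 : M.rank (insert y (X.erase y)) = M.rank (X.erase y) + 1 :=
    FM_rank_insert_of_not_sp h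
  rw [Finset.insert_erase hy] at h1
  omega

lemma FM_not_sp_insert {x y : α} {X : Finset α} (hy : y ∈ X)
    (hns : ¬ Spn M y (X.erase y)) (hx : x ∉ X) (hnsx : ¬ Spn M x X) :
    ¬ Spn M y ((insert x X).erase y) := by
  have hxy : x ≠ y := fun h => hx (h ▸ hy)
  have hset : (insert x X).erase y = insert x (X.erase y) := by
    rw [Finset.erase_insert_of_ne hxy]
  rw [hset]
  intro hsp
  have h1 : M.rank (insert y (insert x (X.erase y))) = M.rank (insert x (X.erase y)) := hsp
  have hset2 : insert y (insert x (X.erase y)) = insert x X := by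
    rw [Finset.insert_comm, Finset.insert_erase hy]
  rw [hset2] at h1
  have h2 : M.rank (insert x X) = M.rank X + 1 := FM_rank_insert_of_not_sp hnsx
  have h3 : M.rank X = M.rank (X.erase y) + 1 := by
    have := FM_erase_rank_of_not_sp hy hns; omega
  have h4 := FM_rank_insert_le (M := M) (X.erase y) x
  omega

end SpnLemmas
section SatSection

variable {α : Type*} [LinearOrder α] {M : FinMatroid α} {q : ℕ} {G : Finset α}

open Finset

/-- The axioms of the choice rule, relativized to a ground set `A` and
chosen set `S`. -/
def SatR (M : FinMatroid α) (q : ℕ) (G : Finset α) (A S : Finset α) : Prop :=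
  S ⊆ A ∧ A ∩ G ⊆ S ∧ S.card = min A.card q ∧
  (∀ x ∈ A \ S,
    (S.card < q → M.rank (insert x S) = M.rank S) ∧
    (S.card = q → ∀ y ∈ S \ G, M.rank (insert x (S.erase y)) ≤ M.rank S)) ∧
  (∀ x ∈ S \ G, ∀ y ∈ A \ S, y > x → M.rank (insert y (S.erase x)) < M.rank S)

lemma Sat_eq_of_small {A S : Finset α} (h : SatR M q G A S) (hA : A.card ≤ q) :
    S = A := by
  obtain ⟨h1, _, h3, _⟩ := h
  have : S.card = A.card := by rw [h3]; omega
  exact Finset.eq_of_subset_of_card_le h1 (le_of_eq this.symm)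

lemma Sat_inter_G {A S : Finset α} (h : SatR M q G A S) : S ∩ G = A ∩ G := by
  apply Finset.Subset.antisymm
  · exact Finset.inter_subset_inter h.1 subset_rfl
  · exact Finset.subset_inter h.2.1 Finset.inter_subset_right

lemma Sat_rank_max {A S S' : Finset α} (h : SatR M q G A S)
    (hS' : S' ⊆ A) (hG' : A ∩ G ⊆ S') (hc' : S'.card = min A.card q) :
    M.rank S' ≤ M.rank S := by
  by_cases hA : A.card ≤ q
  · rw [Sat_eq_of_small h hA]
    exact FM_rank_mono hS'
  · have hq : min A.card q = q := min_eq_right (by omega)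
    have hScard : S.card = q := by rw [h.2.2.1, hq]
    have hS'card : S'.card = q := by rw [hc', hq]
    obtain ⟨BG, -, hBGsub, hBGind, hBGcard⟩ := FM_basis_ext (M := M) M.indep_empty
      (Finset.empty_subset (A ∩ G))
    have hBGS : BG ⊆ S := hBGsub.trans h.2.1
    obtain ⟨B, hBGB, hBS, hBind, hBcard⟩ := FM_basis_ext hBGind hBGS
    by_cases hcase : S \ G ⊆ B
    · -- S has full rank r(A∩G) + q - |A∩G|
      have hdisj : Disjoint BG (S \ G) := by
        apply Finset.disjoint_left.2
        intro z hz hz2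
        exact (Finset.mem_sdiff.1 hz2).2 (Finset.mem_inter.1 (hBGsub hz)).2
      have hsub : BG ∪ (S \ G) ⊆ B := Finset.union_subset hBGB hcase
      have h5 : BG.card + (S \ G).card ≤ B.card := by
        rw [← Finset.card_union_of_disjoint hdisj]
        exact Finset.card_le_card hsub
      have h6 : (S \ G).card + (S ∩ G).card = S.card :=
        Finset.card_sdiff_add_card_inter _ _
      have h7 : S ∩ G = A ∩ G := Sat_inter_G h
      -- rank S + |A∩G| ≥ r(A∩G) + q
      have h8 : M.rank (A ∩ G) + q ≤ M.rank S + (A ∩ G).card := by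
        have h9 : B.card ≤ M.rank S := FM_card_le_rank hBind hBS
        have h6' : (S \ G).card + (A ∩ G).card = S.card := by rw [← h7]; exact h6
        omega
      -- upper bound for S'
      have h10 : S' = (S' \ (A ∩ G)) ∪ (A ∩ G) := by
        rw [Finset.sdiff_union_self_eq_union, Finset.union_eq_left.2 hG']
      have h11 : M.rank S' ≤ M.rank (A ∩ G) + (S' \ (A ∩ G)).card := by
        conv_lhs => rw [h10]
        exact FM_rank_union_le_card _ _
      have h12 : (S' \ (A ∩ G)).card + (A ∩ G).card = S'.card :=
        Finset.card_sdiff_add_card_eq_card hG'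
      omega
    · obtain ⟨s, hsS, hsB⟩ := Finset.not_subset.1 hcase
      by_contra hlt
      push_neg at hlt
      have hBU : B ⊆ S ∪ S' := hBS.trans Finset.subset_union_left
      have hrU : B.card < M.rank (S ∪ S') := by
        have : M.rank S' ≤ M.rank (S ∪ S') :=
          FM_rank_mono Finset.subset_union_right
        omega
      obtain ⟨x, hxU, hxB, hxind⟩ := FM_augment hBind hBU hrU
      have hxS : x ∉ S := by
        intro hxS
        have h13 : (insert x B).card ≤ M.rank S :=
          FM_card_le_rank hxind (Finset.insert_subset hxS hBS)
        rw [Finset.card_insert_of_notMem hxB] at h13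
        omega
      have hxA : x ∈ A \ S := by
        rcases Finset.mem_union.1 hxU with h' | h'
        · exact absurd h' hxS
        · exact Finset.mem_sdiff.2 ⟨hS' h', hxS⟩
      have h14 := (h.2.2.2.1 x hxA).2 hScard s hsS
      have h15 : insert x B ⊆ insert x (S.erase s) := by
        apply Finset.insert_subset_insert
        intro z hz
        exact Finset.mem_erase.2 ⟨fun hzs => hsB (hzs ▸ hz), hBS hz⟩
      have h16 : (insert x B).card ≤ M.rank (insert x (S.erase s)) :=
        FM_card_le_rank hxind h15
      rw [Finset.card_insert_of_notMem hxB] at h16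
      omega

/-- The peeling lemma. -/
lemma FM_peel {E Z : Finset α} (hEZ : E ⊆ Z)
    (h : ∀ s ∈ E, ¬ Spn M s (Z.erase s)) :
    M.rank (Z \ E) + E.card = M.rank Z := by
  classical
  induction E using Finset.induction with
  | empty => simp
  | @insert a E' ha ih =>
    have haZ : a ∈ Z := hEZ (Finset.mem_insert_self _ _)
    have hset : Z \ insert a E' = (Z \ E').erase a := Finset.sdiff_insert _ _ _
    have haZE : a ∈ Z \ E' := Finset.mem_sdiff.2 ⟨haZ, ha⟩
    have hns : ¬ Spn M a ((Z \ E').erase a) := by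
      intro hsp
      exact h a (Finset.mem_insert_self _ _)
        (FM_sp_mono (by
          intro z hz
          obtain ⟨hz1, hz2⟩ := Finset.mem_erase.1 hz
          exact Finset.mem_erase.2 ⟨hz1, (Finset.mem_sdiff.1 hz2).1⟩) hsp)
    have h1 : M.rank ((Z \ E').erase a) + 1 = M.rank (Z \ E') :=
      FM_erase_rank_of_not_sp haZE hns
    have h2 := ih ((Finset.subset_insert _ _).trans hEZ)
      (fun s hs => h s (Finset.mem_insert_of_mem hs))
    rw [hset, Finset.card_insert_of_notMem ha]
    omega

lemma Sat_no_better {A S S' : Finset α} (h : SatR M q G A S)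
    (hS' : S' ⊆ A) (hG' : A ∩ G ⊆ S') (hc' : S'.card = min A.card q)
    (hrank : M.rank S ≤ M.rank S') {d : α} (hd : d ∈ S' \ S)
    (habove : ∀ z, d < z → (z ∈ S ↔ z ∈ S')) : False := by
  classical
  obtain ⟨hdS', hdS⟩ := Finset.mem_sdiff.1 hd
  have hdG : d ∉ G := fun hg => hdS (h.2.1 (Finset.mem_inter.2 ⟨hS' hdS', hg⟩))
  by_cases hA : A.card ≤ q
  · exact hdS (Sat_eq_of_small h hA ▸ (hS' hdS'))
  have hq : min A.card q = q := min_eq_right (by omega)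
  have hScard : S.card = q := by rw [h.2.2.1, hq]
  have hS'card : S'.card = q := by rw [hc', hq]
  have hdA : d ∈ A \ S := Finset.mem_sdiff.2 ⟨hS' hdS', hdS⟩
  set D := (S \ G).filter (· < d) with hD
  by_cases hDem : D = ∅
  · -- then S ⊆ S', so S = S', contradiction
    have hsub : S ⊆ S' := by
      intro s hs
      by_cases hsG : s ∈ G
      · exact hG' (Sat_inter_G h ▸ Finset.mem_inter.2 ⟨hs, hsG⟩)
      · have hsD : s ∉ D := by rw [hDem]; exact Finset.notMem_empty s
        have : ¬ s < d := fun hlt =>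
          hsD (Finset.mem_filter.2 ⟨Finset.mem_sdiff.2 ⟨hs, hsG⟩, hlt⟩)
        have hne : s ≠ d := fun he => hdS (he ▸ hs)
        have : d < s := lt_of_le_of_ne (not_lt.1 this) (Ne.symm hne)
        exact (habove s this).1 hs
    have : S = S' := Finset.eq_of_subset_of_card_le hsub (by omega)
    exact hdS (this ▸ hdS')
  · obtain ⟨s₀, hs₀⟩ := Finset.nonempty_iff_ne_empty.2 hDem
    have hDS : D ⊆ S := fun z hz => (Finset.mem_sdiff.1 (Finset.mem_filter.1 hz).1).1
    have hDmem : ∀ s ∈ D, s ∈ S \ G ∧ s < d := fun s hs =>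
      ⟨(Finset.mem_filter.1 hs).1, (Finset.mem_filter.1 hs).2⟩
    -- P1
    have P1 : ∀ s ∈ D, M.rank (S.erase s) + 1 = M.rank S ∧
        M.rank (insert d (S.erase s)) + 1 = M.rank S := by
      intro s hs
      obtain ⟨hsSG, hsd⟩ := hDmem s hs
      have hnje := h.2.2.2.2 s hsSG d hdA hsd
      have h1 : M.rank S ≤ M.rank (S.erase s) + 1 := by
        have := FM_rank_insert_le (M := M) (S.erase s) s
        rw [Finset.insert_erase (hDS hs)] at this
        omega
      have h2 : M.rank (S.erase s) ≤ M.rank (insert d (S.erase s)) :=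
        FM_le_rank_insert _ _
      omega
    -- P2
    have P2 : M.rank (insert d S) = M.rank S := by
      obtain ⟨h1, h2⟩ := P1 s₀ hs₀
      have hset : insert s₀ (insert d (S.erase s₀)) = insert d S := by
        rw [Finset.insert_comm, Finset.insert_erase (hDS hs₀)]
      have h3 : M.rank (insert d S) ≤ M.rank (insert d (S.erase s₀)) + 1 := by
        have := FM_rank_insert_le (M := M) (insert d (S.erase s₀)) s₀
        rw [hset] at this
        exact this
      have h4 : M.rank S ≤ M.rank (insert d S) := FM_le_rank_insert _ _
      omega
    -- P3
    have P3 : ∀ s ∈ D, ¬ Spn M s ((insert d S).erase s) := by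
      intro s hs hsp
      obtain ⟨hsSG, hsd⟩ := hDmem s hs
      have hds : d ≠ s := fun he => hdS (he ▸ hDS hs)
      have hset : (insert d S).erase s = insert d (S.erase s) :=
        Finset.erase_insert_of_ne hds
      rw [hset] at hsp
      have h1 : M.rank (insert s (insert d (S.erase s))) = M.rank (insert d (S.erase s)) := hsp
      have hset2 : insert s (insert d (S.erase s)) = insert d S := by
        rw [Finset.insert_comm, Finset.insert_erase (hDS hs)]
      rw [hset2] at h1
      obtain ⟨-, h2⟩ := P1 s hs
      omega
    have hDsub : D ⊆ insert d S := hDS.trans (Finset.subset_insert _ _)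
    have hpeel : M.rank ((insert d S) \ D) + D.card = M.rank (insert d S) :=
      FM_peel hDsub P3
    have hdD : d ∉ D := fun hx => hdS (hDS hx)
    have hWd : (insert d S) \ D = insert d (S \ D) := by
      rw [Finset.insert_sdiff_of_notMem _ hdD]
    -- Wd := insert d (S \ D) ⊆ S'
    have hWdS' : insert d (S \ D) ⊆ S' := by
      apply Finset.insert_subset hdS'
      intro w hw
      obtain ⟨hwS, hwD⟩ := Finset.mem_sdiff.1 hw
      by_cases hwG : w ∈ G
      · exact hG' (Sat_inter_G h ▸ Finset.mem_inter.2 ⟨hwS, hwG⟩)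
      · have : ¬ w < d := fun hlt =>
          hwD (Finset.mem_filter.2 ⟨Finset.mem_sdiff.2 ⟨hwS, hwG⟩, hlt⟩)
        have hne : w ≠ d := fun he => hdS (he ▸ hwS)
        exact (habove w (lt_of_le_of_ne (not_lt.1 this) (Ne.symm hne))).1 hwS
    have hcard1 : (S \ D).card + D.card = S.card := Finset.card_sdiff_add_card_eq_card hDS
    have hdSD : d ∉ S \ D := fun hx => hdS (Finset.mem_sdiff.1 hx).1
    have hcard2 : (insert d (S \ D)).card = (S \ D).card + 1 :=
      Finset.card_insert_of_notMem hdSD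
    have hub : M.rank S' ≤ M.rank (insert d (S \ D)) + (S' \ insert d (S \ D)).card := by
      have h10 : S' = (S' \ insert d (S \ D)) ∪ insert d (S \ D) := by
        rw [Finset.sdiff_union_self_eq_union, Finset.union_eq_left.2 hWdS']
      conv_lhs => rw [h10]
      exact FM_rank_union_le_card _ _
    have hcard3 : (S' \ insert d (S \ D)).card + (insert d (S \ D)).card = S'.card :=
      Finset.card_sdiff_add_card_eq_card hWdS'
    have hDone : 1 ≤ D.card := Finset.card_pos.2 ⟨s₀, hs₀⟩
    rw [hWd] at hpeel
    rw [P2] at hpeel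
    omega

lemma Sat_unique {A S₁ S₂ : Finset α} (h1 : SatR M q G A S₁) (h2 : SatR M q G A S₂) :
    S₁ = S₂ := by
  classical
  by_contra hne
  have hΔ : ((S₁ \ S₂) ∪ (S₂ \ S₁)).Nonempty := by
    rw [Finset.nonempty_iff_ne_empty]
    intro hem
    have e1 : S₁ \ S₂ = ∅ := Finset.union_eq_empty.1 hem |>.1
    have e2 : S₂ \ S₁ = ∅ := Finset.union_eq_empty.1 hem |>.2
    exact hne (Finset.Subset.antisymm (Finset.sdiff_eq_empty_iff_subset.1 e1)
      (Finset.sdiff_eq_empty_iff_subset.1 e2))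
  set d := ((S₁ \ S₂) ∪ (S₂ \ S₁)).max' hΔ with hddef
  have hrank12 : M.rank S₂ ≤ M.rank S₁ := Sat_rank_max h1 h2.1 h2.2.1 h2.2.2.1
  have hrank21 : M.rank S₁ ≤ M.rank S₂ := Sat_rank_max h2 h1.1 h1.2.1 h1.2.2.1
  have habove : ∀ z, d < z → (z ∈ S₁ ↔ z ∈ S₂) := by
    intro z hz
    by_contra hiff
    have hzΔ : z ∈ (S₁ \ S₂) ∪ (S₂ \ S₁) := by
      rcases Classical.em (z ∈ S₁) with h' | h'
      · have : z ∉ S₂ := fun h'' => hiff (iff_of_true h' h'')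
        exact Finset.mem_union_left _ (Finset.mem_sdiff.2 ⟨h', this⟩)
      · have : z ∈ S₂ := by
          by_contra h''
          exact hiff (iff_of_false h' h'')
        exact Finset.mem_union_right _ (Finset.mem_sdiff.2 ⟨this, h'⟩)
    exact absurd (Finset.le_max' _ z hzΔ) (not_le.2 hz)
  have hdΔ := Finset.max'_mem _ hΔ
  rw [← hddef] at hdΔ
  rcases Finset.mem_union.1 hdΔ with hd | hd
  · exact Sat_no_better h2 h1.1 h1.2.1 h1.2.2.1 hrank12 hd
      (fun z hz => (habove z hz).symm)
  · exact Sat_no_better h1 h2.1 h2.2.1 h2.2.2.1 hrank21 hd habove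

lemma Sat_shrink {Y Z T : Finset α} (h : SatR M q G Y T) (hTZ : T ⊆ Z) (hZY : Z ⊆ Y) :
    SatR M q G Z T := by
  obtain ⟨h1, h2, h3, h4, h5⟩ := h
  have hcard : T.card = min Z.card q := by
    have hle1 : min Z.card q ≤ min Y.card q :=
      min_le_min (Finset.card_le_card hZY) le_rfl
    have hle2 : T.card ≤ Z.card := Finset.card_le_card hTZ
    have hle3 : T.card ≤ q := by rw [h3]; omega
    have : T.card ≤ min Z.card q := le_min hle2 hle3
    omega
  refine ⟨hTZ, ?_, hcard, ?_, ?_⟩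
  · exact (Finset.inter_subset_inter hZY subset_rfl).trans h2
  · intro x hx
    exact h4 x (Finset.mem_sdiff.2 ⟨hZY (Finset.mem_sdiff.1 hx).1, (Finset.mem_sdiff.1 hx).2⟩)
  · intro x hx y hy
    exact h5 x hx y (Finset.mem_sdiff.2 ⟨hZY (Finset.mem_sdiff.1 hy).1, (Finset.mem_sdiff.1 hy).2⟩)

end SatSection

section PassSection

variable {α : Type*} [LinearOrder α]

open Finset Classical

open Classical in
noncomputable def step1 (M : FinMatroid α) (q : ℕ) (X : Finset α) (x : α) : Finset α :=
  if X.card < q ∧ ¬ Spn M x X then insert x X else X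

noncomputable def pass1 (M : FinMatroid α) (q : ℕ) (X : Finset α) (l : List α) : Finset α :=
  l.foldl (step1 M q) X

open Classical in
noncomputable def step2 (m : ℕ) (X : Finset α) (x : α) : Finset α :=
  if x ∉ X ∧ X.card < m then insert x X else X

noncomputable def pass2 (m : ℕ) (X : Finset α) (l : List α) : Finset α :=
  l.foldl (step2 m) X

variable {M : FinMatroid α} {q : ℕ}

lemma step1_sub (X : Finset α) (x : α) : X ⊆ step1 M q X x := by
  unfold step1; split
  · exact Finset.subset_insert _ _
  · exact subset_rfl

lemma step1_sub' (X : Finset α) (x : α) : step1 M q X x ⊆ insert x X := by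
  unfold step1; split
  · exact subset_rfl
  · exact Finset.subset_insert _ _

lemma pass1_cons (X : Finset α) (x : α) (l : List α) :
    pass1 M q X (x :: l) = pass1 M q (step1 M q X x) l := rfl

lemma pass1_mono (X : Finset α) (l : List α) : X ⊆ pass1 M q X l := by
  induction l generalizing X with
  | nil => exact subset_rfl
  | cons x l ih => exact (step1_sub X x).trans (ih _)

lemma pass1_sub (X : Finset α) (l : List α) : pass1 M q X l ⊆ X ∪ l.toFinset := by
  induction l generalizing X with
  | nil => simp [pass1]
  | cons x l ih =>
    rw [pass1_cons]
    refine (ih _).trans ?_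
    intro z hz
    rcases Finset.mem_union.1 hz with h | h
    · rcases Finset.mem_insert.1 (step1_sub' X x h) with h' | h'
      · simp [h']
      · exact Finset.mem_union_left _ h'
    · simp [Finset.mem_union, List.mem_toFinset] at h ⊢
      tauto

lemma pass1_card_le {X : Finset α} (hX : X.card ≤ q) (l : List α) :
    (pass1 M q X l).card ≤ q := by
  induction l generalizing X with
  | nil => exact hX
  | cons x l ih =>
    rw [pass1_cons]
    apply ih
    unfold step1; split
    · rename_i h
      rw [Finset.card_insert_of_notMem]
      · omega
      · intro hx
        exact h.2 (FM_sp_of_mem hx)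
    · exact hX

lemma pass1_full {X : Finset α} (hX : q ≤ X.card) (l : List α) :
    pass1 M q X l = X := by
  induction l with
  | nil => rfl
  | cons x l ih =>
    rw [pass1_cons]
    have : step1 M q X x = X := by unfold step1; rw [if_neg]; omega
    rw [this, ih]

lemma step2_sub (m : ℕ) (X : Finset α) (x : α) : X ⊆ step2 m X x := by
  unfold step2; split
  · exact Finset.subset_insert _ _
  · exact subset_rfl

lemma step2_sub' (m : ℕ) (X : Finset α) (x : α) : step2 m X x ⊆ insert x X := by
  unfold step2; split
  · exact subset_rfl
  · exact Finset.subset_insert _ _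

lemma pass2_cons (m : ℕ) (X : Finset α) (x : α) (l : List α) :
    pass2 m X (x :: l) = pass2 m (step2 m X x) l := rfl

lemma pass2_mono (m : ℕ) (X : Finset α) (l : List α) : X ⊆ pass2 m X l := by
  induction l generalizing X with
  | nil => exact subset_rfl
  | cons x l ih => exact (step2_sub m X x).trans (ih _)

lemma pass2_sub (m : ℕ) (X : Finset α) (l : List α) :
    pass2 m X l ⊆ X ∪ l.toFinset := by
  induction l generalizing X with
  | nil => simp [pass2]
  | cons x l ih =>
    rw [pass2_cons]
    refine (ih _).trans ?_
    intro z hz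
    rcases Finset.mem_union.1 hz with h | h
    · rcases Finset.mem_insert.1 (step2_sub' m X x h) with h' | h'
      · simp [h']
      · exact Finset.mem_union_left _ h'
    · simp [Finset.mem_union, List.mem_toFinset] at h ⊢
      tauto

lemma pass2_card_le {m : ℕ} {X : Finset α} (hX : X.card ≤ m) (l : List α) :
    (pass2 m X l).card ≤ m := by
  induction l generalizing X with
  | nil => exact hX
  | cons x l ih =>
    rw [pass2_cons]
    apply ih
    unfold step2; split
    · rename_i h
      rw [Finset.card_insert_of_notMem h.1]
      omega
    · exact hX

lemma pass2_full {m : ℕ} {X : Finset α} (hX : m ≤ X.card) (l : List α) :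
    pass2 m X l = X := by
  induction l with
  | nil => rfl
  | cons x l ih =>
    rw [pass2_cons]
    have : step2 m X x = X := by unfold step2; rw [if_neg]; omega
    rw [this, ih]

lemma pass2_reach {m : ℕ} : ∀ (l : List α) (X : Finset α), l.Nodup → X.card ≤ m →
    m ≤ (X ∪ l.toFinset).card → (pass2 m X l).card = m := by
  intro l
  induction l with
  | nil =>
    intro X _ h1 h2
    simp only [List.toFinset_nil, Finset.union_empty] at h2
    simpa [pass2] using le_antisymm h1 h2
  | cons x l ih =>
    intro X hnd h1 h2
    rw [pass2_cons]
    by_cases hx : x ∈ X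
    · have hset : X ∪ (x :: l).toFinset = X ∪ l.toFinset := by
        simp only [List.toFinset_cons]
        rw [Finset.union_insert, Finset.insert_eq_self.2 (Finset.mem_union_left _ hx)]
      have hstep : step2 m X x = X := by unfold step2; rw [if_neg]; tauto
      rw [hstep]
      exact ih X hnd.of_cons h1 (hset ▸ h2)
    · by_cases hcard : X.card < m
      · have hstep : step2 m X x = insert x X := by unfold step2; rw [if_pos ⟨hx, hcard⟩]
        rw [hstep]
        apply ih _ hnd.of_cons
        · rw [Finset.card_insert_of_notMem hx]; omega
        · have hset : insert x X ∪ l.toFinset = X ∪ (x :: l).toFinset := by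
            simp only [List.toFinset_cons]
            rw [Finset.union_insert, Finset.insert_union]
          rw [hset]
          exact h2
      · have hstep : step2 m X x = X := by unfold step2; rw [if_neg]; tauto
        rw [hstep, pass2_full (by omega)]
        omega

lemma pass2_rej_card {m : ℕ} : ∀ (l : List α) (X : Finset α) {z : α}, z ∈ l →
    z ∉ pass2 m X l → m ≤ (pass2 m X l).card := by
  intro l
  induction l with
  | nil => intro X z hz; simp at hz
  | cons x l ih =>
    intro X z hz hznot
    rw [pass2_cons] at hznot ⊢
    rcases List.mem_cons.1 hz with he | he
    · subst he
      by_cases hzX : z ∈ X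
      · exact absurd (pass2_mono m _ l (step2_sub m X z hzX)) hznot
      · by_cases hcard : X.card < m
        · have hstep : step2 m X z = insert z X := by unfold step2; rw [if_pos ⟨hzX, hcard⟩]
          exact absurd (pass2_mono m _ l (hstep ▸ Finset.mem_insert_self z X)) hznot
        · calc m ≤ X.card := by omega
          _ ≤ (pass2 m (step2 m X z) l).card :=
            Finset.card_le_card ((step2_sub m X z).trans (pass2_mono m _ l))
    · exact ih _ he hznot

end PassSection

section SplitSection

variable {α : Type*} [LinearOrder α]

open Finset

lemma sorted_split {l : List α} (hs : l.Pairwise (· > ·)) {y : α} (hy : y ∈ l) :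
    ∃ l₁ l₂, l = l₁ ++ y :: l₂ ∧ (∀ z ∈ l₁, z > y) ∧ (∀ z ∈ l₂, y > z) := by
  induction l with
  | nil => simp at hy
  | cons x l ih =>
    rcases List.mem_cons.1 hy with he | he
    · subst he
      exact ⟨[], l, rfl, by simp, fun z hz => (List.pairwise_cons.1 hs).1 z hz⟩
    · obtain ⟨l₁, l₂, heq, h1, h2⟩ := ih (List.pairwise_cons.1 hs).2 he
      refine ⟨x :: l₁, l₂, by rw [heq]; rfl, ?_, h2⟩
      intro z hz
      rcases List.mem_cons.1 hz with hz' | hz'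
      · subst hz'
        exact (List.pairwise_cons.1 hs).1 y he
      · exact h1 z hz'

variable {M : FinMatroid α} {q : ℕ}

lemma pass1_append (X : Finset α) (l₁ l₂ : List α) :
    pass1 M q X (l₁ ++ l₂) = pass1 M q (pass1 M q X l₁) l₂ :=
  List.foldl_append ..

lemma pass2_append (m : ℕ) (X : Finset α) (l₁ l₂ : List α) :
    pass2 m X (l₁ ++ l₂) = pass2 m (pass2 m X l₁) l₂ :=
  List.foldl_append ..

/-- All the elements added by `pass1` are jointly independent over the base. -/
lemma pass1_indep_aux : ∀ (l : List α) (X Y : Finset α), l.Nodup →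
    (∀ x ∈ l, x ∉ X) → (∀ y ∈ Y, y ∈ X ∧ ¬ Spn M y (X.erase y)) →
    ∀ z, (z ∈ Y ∨ (z ∈ pass1 M q X l ∧ z ∉ X)) →
      ¬ Spn M z ((pass1 M q X l).erase z) := by
  intro l
  induction l with
  | nil =>
    intro X Y _ _ hY z hz
    rcases hz with hz | hz
    · exact (hY z hz).2
    · exact absurd hz.1 hz.2
  | cons x l ih =>
    intro X Y hnd hdisj hY z hz
    rw [pass1_cons] at hz ⊢
    by_cases hstep : X.card < q ∧ ¬ Spn M x X
    · have hs1 : step1 M q X x = insert x X := by unfold step1; rw [if_pos hstep]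
      rw [hs1] at hz ⊢
      have hxX : x ∉ X := hdisj x (List.mem_cons_self)
      have hY' : ∀ y ∈ insert x Y, y ∈ insert x X ∧
          ¬ Spn M y ((insert x X).erase y) := by
        intro y hy
        rcases Finset.mem_insert.1 hy with hy' | hy'
        · subst hy'
          refine ⟨Finset.mem_insert_self _ _, ?_⟩
          rw [Finset.erase_insert hxX]
          exact hstep.2
        · obtain ⟨h1, h2⟩ := hY y hy'
          exact ⟨Finset.mem_insert_of_mem h1, FM_not_sp_insert h1 h2 hxX hstep.2⟩
      have hdisj' : ∀ w ∈ l, w ∉ insert x X := by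
        intro w hw
        rw [Finset.mem_insert]
        push_neg
        exact ⟨fun he => (List.nodup_cons.1 hnd).1 (he ▸ hw),
          hdisj w (List.mem_cons_of_mem _ hw)⟩
      apply ih (insert x X) (insert x Y) (List.nodup_cons.1 hnd).2 hdisj' hY' z
      rcases hz with hz | hz
      · exact Or.inl (Finset.mem_insert_of_mem hz)
      · by_cases hzx : z ∈ insert x X
        · rcases Finset.mem_insert.1 hzx with h' | h'
          · exact Or.inl (h' ▸ Finset.mem_insert_self _ _)
          · exact absurd h' hz.2
        · exact Or.inr ⟨hz.1, hzx⟩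
    · have hs1 : step1 M q X x = X := by unfold step1; rw [if_neg hstep]
      rw [hs1] at hz ⊢
      exact ih X Y (List.nodup_cons.1 hnd).2
        (fun w hw => hdisj w (List.mem_cons_of_mem _ hw)) hY z hz

lemma pass1_indep {l : List α} {X : Finset α} (hnd : l.Nodup)
    (hdisj : ∀ x ∈ l, x ∉ X) {z : α} (hz : z ∈ pass1 M q X l) (hzX : z ∉ X) :
    ¬ Spn M z ((pass1 M q X l).erase z) :=
  pass1_indep_aux l X ∅ hnd hdisj (by simp) z (Or.inr ⟨hz, hzX⟩)

/-- Characterization of rejection in the first pass. -/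
lemma pass1_rej : ∀ (l : List α) (X : Finset α), l.Pairwise (· > ·) →
    (∀ w ∈ l, w ∉ X) → ∀ {y : α}, y ∈ l → y ∉ pass1 M q X l →
    ∃ X', X ⊆ X' ∧ X' ⊆ pass1 M q X l ∧ (∀ z ∈ X', z ∈ X ∨ z > y) ∧
      (Spn M y X' ∨ (q ≤ X'.card ∧ pass1 M q X l = X')) := by
  intro l
  induction l with
  | nil => intro X _ _ y hy; simp at hy
  | cons x l ih =>
    intro X hs hdisj y hy hynot
    rcases List.mem_cons.1 hy with he | he
    · subst he
      by_cases hstep : X.card < q ∧ ¬ Spn M y X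
      · exfalso
        apply hynot
        rw [pass1_cons]
        have hs1 : step1 M q X y = insert y X := by unfold step1; rw [if_pos hstep]
        rw [hs1]
        exact pass1_mono _ l (Finset.mem_insert_self _ _)
      · refine ⟨X, subset_rfl, pass1_mono _ _, fun z hz => Or.inl hz, ?_⟩
        by_cases hsp : Spn M y X
        · exact Or.inl hsp
        · have hcard : q ≤ X.card := by
            by_contra h'
            exact hstep ⟨by omega, hsp⟩
          refine Or.inr ⟨hcard, ?_⟩
          rw [pass1_cons]
          have hs1 : step1 M q X y = X := by unfold step1; rw [if_neg hstep]
          rw [hs1, pass1_full hcard]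
    · have hxy : x > y := (List.pairwise_cons.1 hs).1 y he
      rw [pass1_cons] at hynot ⊢
      by_cases hstep : X.card < q ∧ ¬ Spn M x X
      · have hs1 : step1 M q X x = insert x X := by unfold step1; rw [if_pos hstep]
        rw [hs1] at hynot ⊢
        have hdisj' : ∀ w ∈ l, w ∉ insert x X := by
          intro w hw
          rw [Finset.mem_insert]
          push_neg
          refine ⟨fun hee => ?_, hdisj w (List.mem_cons_of_mem _ hw)⟩
          have := (List.pairwise_cons.1 hs).1 w hw
          rw [hee] at this
          exact lt_irrefl x this
        obtain ⟨X', hXX', hX'P, hmem, hd2⟩ :=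
          ih (insert x X) (List.pairwise_cons.1 hs).2 hdisj' he hynot
        refine ⟨X', (Finset.subset_insert _ _).trans hXX', hX'P, ?_, hd2⟩
        intro z hz
        rcases hmem z hz with h' | h'
        · rcases Finset.mem_insert.1 h' with h'' | h''
          · exact Or.inr (h'' ▸ hxy)
          · exact Or.inl h''
        · exact Or.inr h' 
      · have hs1 : step1 M q X x = X := by unfold step1; rw [if_neg hstep]
        rw [hs1] at hynot ⊢
        exact ih X (List.pairwise_cons.1 hs).2
          (fun w hw => hdisj w (List.mem_cons_of_mem _ hw)) he hynot

end SplitSection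

section Pass2Split

variable {α : Type*} [LinearOrder α]

open Finset

lemma pass2_acc {m : ℕ} {l : List α} {X : Finset α} (hs : l.Pairwise (· > ·))
    {x : α} (hx : x ∈ l)
    (hbound : (X ∪ l.toFinset.filter (x < ·)).card < m) :
    x ∈ pass2 m X l := by
  classical
  obtain ⟨l₁, l₂, heq, h1, h2⟩ := sorted_split hs hx
  subst heq
  rw [pass2_append, pass2_cons]
  set Xx := pass2 m X l₁ with hXx
  have hsub : Xx ⊆ X ∪ (l₁ ++ x :: l₂).toFinset.filter (x < ·) := by
    refine (pass2_sub m X l₁).trans ?_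
    apply Finset.union_subset_union subset_rfl
    intro z hz
    rw [List.mem_toFinset] at hz
    refine Finset.mem_filter.2 ⟨?_, h1 z hz⟩
    rw [List.mem_toFinset]
    exact List.mem_append_left _ hz
  have hcard : Xx.card < m := lt_of_le_of_lt (Finset.card_le_card hsub) hbound
  by_cases hxXx : x ∈ Xx
  · exact pass2_mono m _ l₂ (step2_sub m Xx x hxXx)
  · have : step2 m Xx x = insert x Xx := by unfold step2; rw [if_pos ⟨hxXx, hcard⟩]
    rw [this]
    exact pass2_mono m _ l₂ (Finset.mem_insert_self _ _)

lemma pass2_acc_lb {m : ℕ} {l : List α} {X : Finset α} (hs : l.Pairwise (· > ·))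
    {x : α} (hx : x ∈ l) (hxX : x ∉ X) (hmem : x ∈ pass2 m X l) :
    (X ∪ l.toFinset.filter (x < ·)).card < m := by
  classical
  obtain ⟨l₁, l₂, heq, h1, h2⟩ := sorted_split hs hx
  subst heq
  rw [pass2_append, pass2_cons] at hmem
  set Xx := pass2 m X l₁ with hXx
  have hxXx : x ∉ Xx := by
    intro h
    rcases Finset.mem_union.1 (pass2_sub m X l₁ h) with h' | h'
    · exact hxX h'
    · exact lt_irrefl x (h1 x (List.mem_toFinset.1 h'))
  have hadded : Xx.card < m := by
    by_contra hcard
    have hstep : step2 m Xx x = Xx := by unfold step2; rw [if_neg]; tauto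
    rw [hstep, pass2_full (by omega)] at hmem
    exact hxXx hmem
  have hsub : X ∪ (l₁ ++ x :: l₂).toFinset.filter (x < ·) ⊆ Xx := by
    apply Finset.union_subset (pass2_mono m X l₁)
    intro z hz
    obtain ⟨hz1, hz2⟩ := Finset.mem_filter.1 hz
    rw [List.mem_toFinset] at hz1
    have hzl₁ : z ∈ l₁ := by
      rcases List.mem_append.1 hz1 with h' | h'
      · exact h'
      · rcases List.mem_cons.1 h' with h'' | h''
        · exact absurd (h'' ▸ hz2) (lt_irrefl x)
        · exact absurd (lt_trans hz2 (h2 z h'')) (lt_irrefl x)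
    by_contra hznot
    have hge := pass2_rej_card l₁ X hzl₁ hznot
    rw [← hXx] at hge
    omega
  exact lt_of_le_of_lt (Finset.card_le_card hsub) hadded

lemma pass2_rej_gt {m : ℕ} {l : List α} {X : Finset α} (hs : l.Pairwise (· > ·))
    {y : α} (hy : y ∈ l) (hynot : y ∉ pass2 m X l) :
    ∀ f ∈ pass2 m X l, f ∉ X → f > y := by
  classical
  obtain ⟨l₁, l₂, heq, h1, h2⟩ := sorted_split hs hy
  subst heq
  rw [pass2_append, pass2_cons] at hynot ⊢
  set Xy := pass2 m X l₁ with hXy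
  have hyXy : y ∉ Xy := fun h => hynot (pass2_mono m _ l₂ (step2_sub m Xy y h))
  have hfull : m ≤ Xy.card := by
    by_contra hcard
    have hstep : step2 m Xy y = insert y Xy := by
      unfold step2; rw [if_pos ⟨hyXy, by omega⟩]
    exact hynot (pass2_mono m _ l₂ (hstep ▸ Finset.mem_insert_self _ _))
  have hcond : ¬ (y ∉ Xy ∧ Xy.card < m) := by rintro ⟨-, h⟩; omega
  have hstep : step2 m Xy y = Xy := by unfold step2; rw [if_neg hcond]
  rw [hstep, pass2_full hfull]
  intro f hf hfX
  rcases Finset.mem_union.1 (pass2_sub m X l₁ hf) with h' | h'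
  · exact absurd h' hfX
  · exact h1 f (List.mem_toFinset.1 h')

end Pass2Split

section GrSection

variable {α : Type*} [LinearOrder α]

open Finset

noncomputable def dlist (S : Finset α) : List α := (S.sort (· ≤ ·)).reverse

lemma mem_dlist {S : Finset α} {x : α} : x ∈ dlist S ↔ x ∈ S := by
  simp [dlist, Finset.mem_sort]

lemma dlist_nodup (S : Finset α) : (dlist S).Nodup := by
  rw [dlist, List.nodup_reverse]
  exact Finset.sort_nodup _ _

lemma dlist_sorted (S : Finset α) : (dlist S).Pairwise (· > ·) := by
  rw [dlist, List.pairwise_reverse]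
  exact (Finset.sortedLT_sort S).pairwise

variable (M : FinMatroid α) (q : ℕ) (G : Finset α)

noncomputable def GrP (A : Finset α) : Finset α :=
  pass1 M q (A ∩ G) (dlist (A \ G))

noncomputable def Gr (A : Finset α) : Finset α :=
  pass2 (min A.card q) (GrP M q G A) (dlist (A \ G))

variable {M q G}

lemma GrP_disj (A : Finset α) : ∀ w ∈ dlist (A \ G), w ∉ A ∩ G := by
  intro w hw hwG
  exact (Finset.mem_sdiff.1 (mem_dlist.1 hw)).2 (Finset.mem_inter.1 hwG).2

lemma GrP_init (A : Finset α) : A ∩ G ⊆ GrP M q G A := pass1_mono _ _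

lemma GrP_sub (A : Finset α) : GrP M q G A ⊆ A := by
  refine (pass1_sub _ _).trans ?_
  apply Finset.union_subset Finset.inter_subset_left
  intro z hz
  exact (Finset.mem_sdiff.1 (mem_dlist.1 (List.mem_toFinset.1 hz))).1

lemma GrP_card (hG : G.card ≤ q) (A : Finset α) : (GrP M q G A).card ≤ q :=
  pass1_card_le (le_trans (Finset.card_le_card Finset.inter_subset_right) hG) _

lemma GrP_subset_Gr (A : Finset α) : GrP M q G A ⊆ Gr M q G A := pass2_mono _ _ _

lemma Gr_sub (A : Finset α) : Gr M q G A ⊆ A := by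
  refine (pass2_sub _ _ _).trans ?_
  apply Finset.union_subset (GrP_sub A)
  intro z hz
  exact (Finset.mem_sdiff.1 (mem_dlist.1 (List.mem_toFinset.1 hz))).1

lemma Gr_card (hG : G.card ≤ q) (A : Finset α) :
    (Gr M q G A).card = min A.card q := by
  apply pass2_reach _ _ (dlist_nodup _)
  · exact le_min (Finset.card_le_card (GrP_sub A)) (GrP_card hG A)
  · have hsub : A ⊆ GrP M q G A ∪ (dlist (A \ G)).toFinset := by
      intro z hz
      by_cases hzG : z ∈ G
      · exact Finset.mem_union_left _ (GrP_init A (Finset.mem_inter.2 ⟨hz, hzG⟩))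
      · exact Finset.mem_union_right _
          (List.mem_toFinset.2 (mem_dlist.2 (Finset.mem_sdiff.2 ⟨hz, hzG⟩)))
    calc min A.card q ≤ A.card := min_le_left _ _
    _ ≤ _ := Finset.card_le_card hsub

lemma Gr_inter_G (A : Finset α) : A ∩ G ⊆ Gr M q G A :=
  (GrP_init A).trans (GrP_subset_Gr A)

lemma Gr_eq_self (hG : G.card ≤ q) {A : Finset α} (hA : A.card ≤ q) :
    Gr M q G A = A := by
  apply Finset.eq_of_subset_of_card_le (Gr_sub A)
  rw [Gr_card hG A]
  omega

/-- The greedy rule satisfies the axioms. -/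
lemma Gr_Sat (hG : G.card ≤ q) (A : Finset α) : SatR M q G A (Gr M q G A) := by
  classical
  set l := dlist (A \ G) with hl
  set P := GrP M q G A with hP
  set F := Gr M q G A with hF
  set m := min A.card q with hm
  have hFP2 : F = pass2 m P l := rfl
  have hPp1 : P = pass1 M q (A ∩ G) l := rfl
  have hsorted : l.Pairwise (· > ·) := dlist_sorted _
  have hnodup : l.Nodup := dlist_nodup _
  have hdisj : ∀ w ∈ l, w ∉ A ∩ G := GrP_disj A
  have hFsub : F ⊆ A := Gr_sub A
  have hFG : A ∩ G ⊆ F := Gr_inter_G A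
  have hFcard : F.card = m := Gr_card hG A
  have hPq : P.card ≤ q := GrP_card hG A
  refine ⟨hFsub, hFG, hFcard, ?_, ?_⟩
  · -- maximal utilization
    intro x hx
    obtain ⟨hxA, hxF⟩ := Finset.mem_sdiff.1 hx
    have hxG : x ∉ G := fun hg => hxF (hFG (Finset.mem_inter.2 ⟨hxA, hg⟩))
    have hxl : x ∈ l := mem_dlist.2 (Finset.mem_sdiff.2 ⟨hxA, hxG⟩)
    have hxP : x ∉ P := fun hp => hxF (GrP_subset_Gr A hp)
    constructor
    · -- below capacity: impossible, since then F = A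
      intro hlt
      exfalso
      have hmlt : m < q := by omega
      have hmA : m = A.card := by
        rw [hm] at hmlt ⊢
        omega
      have : F = A := Finset.eq_of_subset_of_card_le hFsub (by omega)
      exact hxF (this ▸ hxA)
    · -- at capacity
      intro hcap y hy
      obtain ⟨hyF, hyG⟩ := Finset.mem_sdiff.1 hy
      obtain ⟨X', hXX', hX'P, hmemX', hdisj2⟩ :=
        pass1_rej l (A ∩ G) hsorted hdisj hxl (by rw [← hPp1]; exact hxP)
      rw [← hPp1] at hX'P hdisj2
      rcases hdisj2 with hsp | ⟨hqX', hPX'⟩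
      · -- x is spanned by P, hence by F
        have hspF : Spn M x F := FM_sp_mono (hX'P.trans (GrP_subset_Gr A)) hsp
        calc M.rank (insert x (F.erase y)) ≤ M.rank (insert x F) :=
              FM_rank_mono (Finset.insert_subset_insert _ (Finset.erase_subset _ _))
        _ = M.rank F := hspF
      · -- capacity bound in first pass: F = P, y is an essential add
        have hPcard : P.card = q := by
          rw [hPX'] at hPq ⊢
          omega
        have hFeqP : F = P := by
          rw [hFP2]
          exact pass2_full (by omega) l
        have hyP : y ∈ P := hFeqP ▸ hyF
        have hyAG : y ∉ A ∩ G := fun hg => hyG (Finset.mem_inter.1 hg).2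
        have hns : ¬ Spn M y (P.erase y) := by
          rw [hPp1]
          exact pass1_indep hnodup hdisj (hPp1 ▸ hyP) hyAG
        have h1 : M.rank (P.erase y) + 1 = M.rank P := FM_erase_rank_of_not_sp hyP hns
        have h2 := FM_rank_insert_le (M := M) (F.erase y) x
        rw [hFeqP]
        rw [hFeqP] at h2
        omega
  · -- no justified envy
    intro x hx y hy hyx
    obtain ⟨hxF, hxG⟩ := Finset.mem_sdiff.1 hx
    obtain ⟨hyA, hyF⟩ := Finset.mem_sdiff.1 hy
    have hyG : y ∉ G := fun hg => hyF (hFG (Finset.mem_inter.2 ⟨hyA, hg⟩))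
    have hyl : y ∈ l := mem_dlist.2 (Finset.mem_sdiff.2 ⟨hyA, hyG⟩)
    have hyP : y ∉ P := fun hp => hyF (GrP_subset_Gr A hp)
    have hxAG : x ∉ A ∩ G := fun hg => hxG (Finset.mem_inter.1 hg).2
    obtain ⟨X', hXX', hX'P, hmemX', hdisj2⟩ :=
      pass1_rej l (A ∩ G) hsorted hdisj hyl (by rw [← hPp1]; exact hyP)
    rw [← hPp1] at hX'P hdisj2
    rcases hdisj2 with hsp | ⟨hqX', hPX'⟩
    · -- y spanned by X' (all elements of X' are guaranteed or above y)
      by_cases hxP : x ∈ P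
      · -- x is a pass element
        have hxX' : x ∉ X' := by
          intro h
          rcases hmemX' x h with h' | h'
          · exact hxAG h'
          · exact absurd hyx (not_lt.2 (le_of_lt h'))
        have hX'F : X' ⊆ F.erase x := by
          intro z hz
          refine Finset.mem_erase.2 ⟨fun he => hxX' (he ▸ hz), ?_⟩
          exact GrP_subset_Gr A (hX'P hz)
        have hspF : Spn M y (F.erase x) := FM_sp_mono hX'F hsp
        -- fills are > y > x and spanned by P.erase x
        have hfillgt : ∀ f ∈ F, f ∉ P → f > y := by
          intro f hf hfP
          exact pass2_rej_gt hsorted hyl (hFP2 ▸ hyF) f (hFP2 ▸ hf) hfP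
        have hfillsp : ∀ f ∈ F \ P, Spn M f (P.erase x) := by
          intro f hf
          obtain ⟨hfF, hfP⟩ := Finset.mem_sdiff.1 hf
          have hfA : f ∈ A := hFsub hfF
          have hfG : f ∉ G := by
            intro hg
            exact hfP (GrP_init A (Finset.mem_inter.2 ⟨hfA, hg⟩))
          have hfl : f ∈ l := mem_dlist.2 (Finset.mem_sdiff.2 ⟨hfA, hfG⟩)
          obtain ⟨X'', hXX'', hX''P, hmemX'', hdisj3⟩ :=
            pass1_rej l (A ∩ G) hsorted hdisj hfl (by rw [← hPp1]; exact hfP)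
          rw [← hPp1] at hX''P hdisj3
          rcases hdisj3 with hsp' | ⟨hqX'', hPX''⟩
          · -- f spanned by X'' ⊆ P.erase x
            apply FM_sp_mono _ hsp'
            intro z hz
            refine Finset.mem_erase.2 ⟨?_, hX''P hz⟩
            intro he
            rcases hmemX'' z hz with h' | h'
            · exact hxAG (he ▸ h')
            · -- z > f > y > x, but z = x
              have hfy : f > y := hfillgt f hfF hfP
              have : z > x := lt_trans hyx (lt_trans hfy h')
              exact absurd (he ▸ this) (lt_irrefl x)
          · -- capacity: F = P, contradiction with f ∉ P
            exfalso
            apply hfP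
            have hPcard : P.card = q := by rw [hPX''] at hPq ⊢; omega
            have : F = P := by rw [hFP2]; exact pass2_full (by omega) l
            exact this ▸ hfF
        -- rank computations
        have hns : ¬ Spn M x (P.erase x) := by
          rw [hPp1]
          exact pass1_indep hnodup hdisj (hPp1 ▸ hxP) hxAG
        have h1 : M.rank (P.erase x) + 1 = M.rank P := FM_erase_rank_of_not_sp hxP hns
        have hFx : F.erase x = (F \ P) ∪ (P.erase x) := by
          ext z
          simp only [Finset.mem_erase, Finset.mem_union, Finset.mem_sdiff]
          constructor
          · rintro ⟨hzx, hzF⟩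
            by_cases hzP : z ∈ P
            · exact Or.inr ⟨hzx, hzP⟩
            · exact Or.inl ⟨hzF, hzP⟩
          · rintro (⟨hzF, hzP⟩ | ⟨hzx, hzP⟩)
            · exact ⟨fun he => hzP (he ▸ hxP), hzF⟩
            · exact ⟨hzx, GrP_subset_Gr A hzP⟩
        have h2 : M.rank (F.erase x) = M.rank (P.erase x) := by
          rw [hFx]
          exact FM_rank_union_eq_of_sp (fun f hf => hfillsp f hf)
        have hFF : F = (F \ P) ∪ P := by
          rw [Finset.sdiff_union_self_eq_union,
            Finset.union_eq_left.2 (GrP_subset_Gr A)]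
        have h3 : M.rank F = M.rank P := by
          conv_lhs => rw [hFF]
          exact FM_rank_union_eq_of_sp (fun f hf =>
            FM_sp_mono (Finset.erase_subset _ _) (hfillsp f hf))
        have h4 : M.rank (insert y (F.erase x)) = M.rank (F.erase x) := hspF
        omega
      · -- x is a fill element: contradiction since fills are > y
        exfalso
        have : x > y := pass2_rej_gt hsorted hyl (hFP2 ▸ hyF) x (hFP2 ▸ hxF) hxP
        exact absurd (lt_trans hyx this) (lt_irrefl x)
    · -- capacity: F = P = X', whose non-guaranteed elements are all > y
      exfalso
      have hPcard : P.card = q := by rw [hPX'] at hPq ⊢; omega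
      have hFeqP : F = P := by rw [hFP2]; exact pass2_full (by omega) l
      have hxX' : x ∈ X' := by rw [← hPX', ← hFeqP]; exact hxF
      rcases hmemX' x hxX' with h' | h'
      · exact hxAG h'
      · exact absurd (lt_trans hyx h') (lt_irrefl x)

end GrSection

section RunComp

variable {α : Type*} [LinearOrder α] {M : FinMatroid α} {q : ℕ}

open Finset

lemma card_le_of_inv {XA XD : Finset α} (h1 : ∀ s ∈ XA, Spn M s XD)
    (h2 : XA.card + M.rank XD ≤ XD.card + M.rank XA) : XA.card ≤ XD.card := by
  have h3 : M.rank XA ≤ M.rank XD := FM_rank_le_of_sp h1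
  omega

lemma run_comp (p : α → Bool) : ∀ (l : List α) (XA XD : Finset α), l.Nodup →
    (∀ w ∈ l, w ∉ XA ∧ w ∉ XD) →
    (∀ s ∈ XA, Spn M s XD) →
    (XA.card + M.rank XD ≤ XD.card + M.rank XA) →
    (∀ z, z ∈ pass1 M q XD l → z ∉ XD → p z = true →
      z ∈ pass1 M q XA (l.filter p)) ∧
    ((pass1 M q XD l).card < q →
      (∀ s ∈ pass1 M q XA (l.filter p), Spn M s (pass1 M q XD l)) ∧
      ((pass1 M q XA (l.filter p)).card + M.rank (pass1 M q XD l) ≤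
        (pass1 M q XD l).card + M.rank (pass1 M q XA (l.filter p))) ∧
      (∀ z ∈ l, p z = true → z ∉ pass1 M q XA (l.filter p) →
        z ∉ pass1 M q XD l)) := by
  intro l
  induction l with
  | nil =>
    intro XA XD _ _ hinv1 hinv2
    refine ⟨?_, ?_⟩
    · intro z hz hz2 _
      exact absurd hz hz2
    · intro _
      refine ⟨hinv1, hinv2, ?_⟩
      intro z hz
      simp at hz
  | cons x l ih =>
    intro XA XD hnd hdisj hinv1 hinv2
    have hxXA : x ∉ XA := (hdisj x (List.mem_cons_self)).1
    have hxXD : x ∉ XD := (hdisj x (List.mem_cons_self)).2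
    have hxl : x ∉ l := (List.nodup_cons.1 hnd).1
    have hndl : l.Nodup := (List.nodup_cons.1 hnd).2
    have hdisjl : ∀ w ∈ l, w ∉ XA ∧ w ∉ XD :=
      fun w hw => hdisj w (List.mem_cons_of_mem _ hw)
    by_cases hqD : q ≤ XD.card
    · have hDfull : pass1 M q XD (x :: l) = XD := pass1_full hqD _
      refine ⟨?_, ?_⟩
      · intro z hz hz2 _
        rw [hDfull] at hz
        exact absurd hz hz2
      · intro hlt
        rw [hDfull] at hlt
        omega
    · push_neg at hqD
      by_cases hpx : p x = true
      · have hfil : (x :: l).filter p = x :: l.filter p := List.filter_cons_of_pos hpx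
        by_cases hDsp : Spn M x XD
        · -- D rejects x by span
          have hsD : step1 M q XD x = XD := by
            unfold step1; rw [if_neg]; tauto
          by_cases hA : XA.card < q ∧ ¬ Spn M x XA
          · -- A adds x
            have hsA : step1 M q XA x = insert x XA := by unfold step1; rw [if_pos hA]
            have hinv1' : ∀ s ∈ insert x XA, Spn M s XD := by
              intro s hs
              rcases Finset.mem_insert.1 hs with h' | h'
              · exact h' ▸ hDsp
              · exact hinv1 s h'
            have hinv2' : (insert x XA).card + M.rank XD ≤ XD.card + M.rank (insert x XA) := by
              rw [Finset.card_insert_of_notMem hxXA, FM_rank_insert_of_not_sp hA.2]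
              omega
            have hdisj' : ∀ w ∈ l, w ∉ insert x XA ∧ w ∉ XD := by
              intro w hw
              refine ⟨?_, (hdisjl w hw).2⟩
              rw [Finset.mem_insert]
              push_neg
              exact ⟨fun he => hxl (he ▸ hw), (hdisjl w hw).1⟩
            obtain ⟨ih1, ih2⟩ := ih (insert x XA) XD hndl hdisj' hinv1' hinv2'
            rw [pass1_cons, hsD, hfil, pass1_cons, hsA]
            refine ⟨ih1, ?_⟩
            intro hlt
            obtain ⟨a, b, c⟩ := ih2 hlt
            refine ⟨a, b, ?_⟩
            intro z hz hpz hznot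
            rcases List.mem_cons.1 hz with he | he
            · exfalso
              apply hznot
              rw [he]
              exact pass1_mono _ _ (Finset.mem_insert_self _ _)
            · exact c z he hpz hznot
          · -- A rejects x as well
            have hsA : step1 M q XA x = XA := by unfold step1; rw [if_neg hA]
            obtain ⟨ih1, ih2⟩ := ih XA XD hndl hdisjl hinv1 hinv2
            rw [pass1_cons, hsD, hfil, pass1_cons, hsA]
            refine ⟨ih1, ?_⟩
            intro hlt
            obtain ⟨a, b, c⟩ := ih2 hlt
            refine ⟨a, b, ?_⟩
            intro z hz hpz hznot
            rcases List.mem_cons.1 hz with he | he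
            · -- z = x : x is not in the D-run output
              subst he
              intro hmem
              rcases Finset.mem_union.1 (pass1_sub XD l hmem) with h' | h'
              · exact hxXD h'
              · exact hxl (List.mem_toFinset.1 h')
            · exact c z he hpz hznot
        · -- D adds x
          have hsD : step1 M q XD x = insert x XD := by
            unfold step1; rw [if_pos ⟨hqD, hDsp⟩]
          have hAsp : ¬ Spn M x XA := fun h => hDsp (FM_sp_trans hinv1 h)
          have hAcard : XA.card < q := lt_of_le_of_lt (card_le_of_inv hinv1 hinv2) hqD
          have hsA : step1 M q XA x = insert x XA := by
            unfold step1; rw [if_pos ⟨hAcard, hAsp⟩]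
          have hinv1' : ∀ s ∈ insert x XA, Spn M s (insert x XD) := by
            intro s hs
            rcases Finset.mem_insert.1 hs with h' | h'
            · exact h' ▸ FM_sp_of_mem (Finset.mem_insert_self _ _)
            · exact FM_sp_mono (Finset.subset_insert _ _) (hinv1 s h')
          have hinv2' : (insert x XA).card + M.rank (insert x XD) ≤
              (insert x XD).card + M.rank (insert x XA) := by
            rw [Finset.card_insert_of_notMem hxXA, Finset.card_insert_of_notMem hxXD,
              FM_rank_insert_of_not_sp hAsp, FM_rank_insert_of_not_sp hDsp]
            omega
          have hdisj' : ∀ w ∈ l, w ∉ insert x XA ∧ w ∉ insert x XD := by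
            intro w hw
            rw [Finset.mem_insert, Finset.mem_insert]
            push_neg
            exact ⟨⟨fun he => hxl (he ▸ hw), (hdisjl w hw).1⟩,
              ⟨fun he => hxl (he ▸ hw), (hdisjl w hw).2⟩⟩
          obtain ⟨ih1, ih2⟩ := ih (insert x XA) (insert x XD) hndl hdisj' hinv1' hinv2'
          rw [pass1_cons, hsD, hfil, pass1_cons, hsA]
          refine ⟨?_, ?_⟩
          · intro z hz hz2 hpz
            by_cases hzx : z = x
            · rw [hzx]
              exact pass1_mono _ _ (Finset.mem_insert_self _ _)
            · have : z ∉ insert x XD := by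
                rw [Finset.mem_insert]
                push_neg
                exact ⟨hzx, hz2⟩
              exact ih1 z hz this hpz
          · intro hlt
            obtain ⟨a, b, c⟩ := ih2 hlt
            refine ⟨a, b, ?_⟩
            intro z hz hpz hznot
            rcases List.mem_cons.1 hz with he | he
            · exfalso
              apply hznot
              rw [he]
              exact pass1_mono _ _ (Finset.mem_insert_self _ _)
            · exact c z he hpz hznot
      · -- p x = false : x is not in the A-market
        have hfil : (x :: l).filter p = l.filter p :=
          List.filter_cons_of_neg (by simp [hpx])
        by_cases hDsp : Spn M x XD
        · -- D rejects
          have hsD : step1 M q XD x = XD := by unfold step1; rw [if_neg]; tauto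
          obtain ⟨ih1, ih2⟩ := ih XA XD hndl hdisjl hinv1 hinv2
          rw [pass1_cons, hsD, hfil]
          refine ⟨ih1, ?_⟩
          intro hlt
          obtain ⟨a, b, c⟩ := ih2 hlt
          refine ⟨a, b, ?_⟩
          intro z hz hpz hznot
          rcases List.mem_cons.1 hz with he | he
          · exact absurd (he ▸ hpz) (by simp [hpx])
          · exact c z he hpz hznot
        · -- D adds
          have hsD : step1 M q XD x = insert x XD := by
            unfold step1; rw [if_pos ⟨hqD, hDsp⟩]
          have hinv1' : ∀ s ∈ XA, Spn M s (insert x XD) :=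
            fun s hs => FM_sp_mono (Finset.subset_insert _ _) (hinv1 s hs)
          have hinv2' : XA.card + M.rank (insert x XD) ≤
              (insert x XD).card + M.rank XA := by
            rw [Finset.card_insert_of_notMem hxXD, FM_rank_insert_of_not_sp hDsp]
            omega
          have hdisj' : ∀ w ∈ l, w ∉ XA ∧ w ∉ insert x XD := by
            intro w hw
            refine ⟨(hdisjl w hw).1, ?_⟩
            rw [Finset.mem_insert]
            push_neg
            exact ⟨fun he => hxl (he ▸ hw), (hdisjl w hw).2⟩
          obtain ⟨ih1, ih2⟩ := ih XA (insert x XD) hndl hdisj' hinv1' hinv2'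
          rw [pass1_cons, hsD, hfil]
          refine ⟨?_, ?_⟩
          · intro z hz hz2 hpz
            by_cases hzx : z = x
            · exact absurd (hzx ▸ hpz) (by simp [hpx])
            · have : z ∉ insert x XD := by
                rw [Finset.mem_insert]
                push_neg
                exact ⟨hzx, hz2⟩
              exact ih1 z hz this hpz
          · intro hlt
            obtain ⟨a, b, c⟩ := ih2 hlt
            refine ⟨a, b, ?_⟩
            intro z hz hpz hznot
            rcases List.mem_cons.1 hz with he | he
            · exact absurd (he ▸ hpz) (by simp [hpx])
            · exact c z he hpz hznot

end RunComp

section GrSubst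

variable {α : Type*} [LinearOrder α] {M : FinMatroid α} {q : ℕ} {G : Finset α}

open Finset

lemma dlist_filter_eq {A D : Finset α} (hAD : A ⊆ D) :
    (dlist (D \ G)).filter (fun z => decide (z ∈ A)) = dlist (A \ G) := by
  classical
  have hanti : IsAntisymm α (· > ·) := ⟨fun a b h1 h2 => absurd h1 (asymm h2)⟩
  refine (fun hp hs => List.Perm.eq_of_pairwise (le := (· > ·))
    (fun a b _ _ h1 h2 => absurd h1 (asymm h2)) hs (dlist_sorted _) hp) ?_ ?_
  · apply List.perm_of_nodup_nodup_toFinset_eq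
    · exact (dlist_nodup _).filter _
    · exact dlist_nodup _
    · ext z
      simp only [List.mem_toFinset, List.mem_filter, mem_dlist, Finset.mem_sdiff,
        decide_eq_true_iff]
      constructor
      · rintro ⟨⟨_, h2⟩, h3⟩
        exact ⟨h3, h2⟩
      · rintro ⟨h1, h2⟩
        exact ⟨⟨hAD h1, h2⟩, h1⟩
  · exact List.Pairwise.filter _ (dlist_sorted _)

/-- Substitutes property of the greedy rule. -/
lemma Gr_subst (hG : G.card ≤ q) {A D : Finset α} (hAD : A ⊆ D) :
    ∀ x ∈ Gr M q G D, x ∈ A → x ∈ Gr M q G A := by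
  classical
  intro x hxGr hxA
  by_cases hxG : x ∈ G
  · exact Gr_inter_G A (Finset.mem_inter.2 ⟨hxA, hxG⟩)
  set lD := dlist (D \ G) with hlD
  set lA := dlist (A \ G) with hlA
  have hfil : lD.filter (fun z => decide (z ∈ A)) = lA := dlist_filter_eq hAD
  have hnodup : lD.Nodup := dlist_nodup _
  have hsorted : lD.Pairwise (· > ·) := dlist_sorted _
  have hdisj : ∀ w ∈ lD, w ∉ A ∩ G ∧ w ∉ D ∩ G := by
    intro w hw
    have hwG : w ∉ G := (Finset.mem_sdiff.1 (mem_dlist.1 hw)).2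
    exact ⟨fun h => hwG (Finset.mem_inter.1 h).2, fun h => hwG (Finset.mem_inter.1 h).2⟩
  have hinv1 : ∀ s ∈ A ∩ G, Spn M s (D ∩ G) := by
    intro s hs
    exact FM_sp_of_mem (Finset.mem_inter.2
      ⟨hAD (Finset.mem_inter.1 hs).1, (Finset.mem_inter.1 hs).2⟩)
  have hinv2 : (A ∩ G).card + M.rank (D ∩ G) ≤ (D ∩ G).card + M.rank (A ∩ G) :=
    FM_card_rank_sub (Finset.inter_subset_inter hAD subset_rfl)
  obtain ⟨run1, run2⟩ := run_comp (M := M) (q := q) (fun z => decide (z ∈ A))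
    lD (A ∩ G) (D ∩ G) hnodup hdisj hinv1 hinv2
  have hPA : pass1 M q (A ∩ G) (lD.filter (fun z => decide (z ∈ A))) = GrP M q G A := by
    rw [hfil]; rfl
  have hPD : pass1 M q (D ∩ G) lD = GrP M q G D := rfl
  rw [hPA] at run1 run2
  rw [hPD] at run1 run2
  have hxlD : x ∈ lD := mem_dlist.2 (Finset.mem_sdiff.2 ⟨hAD hxA, hxG⟩)
  have hxDG : x ∉ D ∩ G := fun h => hxG (Finset.mem_inter.1 h).2
  by_cases hxP : x ∈ GrP M q G D
  · exact GrP_subset_Gr A (run1 x hxP hxDG (by simp [hxA]))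
  · -- x is a fill element of the D-run
    by_cases hAq : A.card ≤ q
    · rw [Gr_eq_self hG hAq]
      exact hxA
    push_neg at hAq
    have hmA : min A.card q = q := min_eq_right (by omega)
    have hmD : min D.card q = q :=
      min_eq_right (le_trans (by omega) (Finset.card_le_card hAD))
    have hxGr2 : x ∈ pass2 (min D.card q) (GrP M q G D) lD := hxGr
    have hlbD : (GrP M q G D ∪ lD.toFinset.filter (x < ·)).card < min D.card q :=
      pass2_acc_lb hsorted hxlD hxP hxGr2
    have hPDlt : (GrP M q G D).card < q := by
      have h1 : (GrP M q G D).card ≤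
          (GrP M q G D ∪ lD.toFinset.filter (x < ·)).card :=
        Finset.card_le_card Finset.subset_union_left
      omega
    obtain ⟨a, b, c⟩ := run2 hPDlt
    have hPAle : (GrP M q G A).card ≤ (GrP M q G D).card := card_le_of_inv a b
    have hsub : (lA.toFinset.filter (x < ·)) \ GrP M q G A ⊆
        (lD.toFinset.filter (x < ·)) \ GrP M q G D := by
      intro z hz
      obtain ⟨hz1, hz2⟩ := Finset.mem_sdiff.1 hz
      obtain ⟨hzl, hzgt⟩ := Finset.mem_filter.1 hz1
      have hzAG : z ∈ A \ G := mem_dlist.1 (List.mem_toFinset.1 hzl)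
      have hzlD : z ∈ lD := mem_dlist.2 (Finset.mem_sdiff.2
        ⟨hAD (Finset.mem_sdiff.1 hzAG).1, (Finset.mem_sdiff.1 hzAG).2⟩)
      have hzD : z ∉ GrP M q G D :=
        c z hzlD (by simp [(Finset.mem_sdiff.1 hzAG).1]) hz2
      exact Finset.mem_sdiff.2
        ⟨Finset.mem_filter.2 ⟨List.mem_toFinset.2 hzlD, hzgt⟩, hzD⟩
    have hcardU : ∀ (X F : Finset α), (X ∪ F).card = X.card + (F \ X).card := by
      intro X F
      rw [← Finset.union_sdiff_self_eq_union]
      exact Finset.card_union_of_disjoint Finset.disjoint_sdiff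
    by_cases hxPA : x ∈ GrP M q G A
    · exact GrP_subset_Gr A hxPA
    have hbA : (GrP M q G A ∪ lA.toFinset.filter (x < ·)).card < min A.card q := by
      rw [hmA]
      rw [hcardU] at hlbD ⊢
      have h2 := Finset.card_le_card hsub
      rw [hmD] at hlbD
      omega
    have hxlA : x ∈ lA := mem_dlist.2 (Finset.mem_sdiff.2 ⟨hxA, hxG⟩)
    exact pass2_acc (dlist_sorted _) hxlA hbA

end GrSubst


/-- Every choice rule satisfying guaranteed enrollment, maximal utilization
of reservations, no justified envy under reserves, and non-wastefulness
satisfies path independence and size monotonicity. -/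
theorem guaranteedEnrollment_pathIndependent_sizeMonotone
    {α : Type*} [Fintype α] [LinearOrder α]
    (M : FinMatroid α) (q : ℕ) (G : Finset α) (hG : G.card ≤ q)
    (C : Finset α → Finset α) (hC : ∀ A : Finset α, C A ⊆ A)
    -- (i) guaranteed enrollment for returning students
    (hGE : ∀ A : Finset α, A ∩ G ⊆ C A)
    -- (ii) maximal utilization of reservations
    (hMU : ∀ A : Finset α, ∀ x ∈ A \ C A,
      ((C A).card < q → M.rank (insert x (C A)) = M.rank (C A)) ∧
      ((C A).card = q → ∀ y ∈ C A \ G,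
        M.rank (insert x ((C A).erase y)) ≤ M.rank (C A)))
    -- (iii) no justified envy under reserves
    (hNJE : ∀ A : Finset α, ∀ x ∈ C A \ G, ∀ y ∈ A \ C A,
      y > x → M.rank (insert y ((C A).erase x)) < M.rank (C A))
    -- (iv) non-wastefulness
    (hNW : ∀ A : Finset α, (C A).card = min A.card q) :
    (∀ A B : Finset α, C (A ∪ B) = C (C A ∪ B)) ∧
    (∀ A B : Finset α, A ⊆ B → (C A).card ≤ (C B).card) := by
  have hSat : ∀ A : Finset α, SatR M q G A (C A) := by
    intro A
    exact ⟨hC A, hGE A, hNW A, hMU A, hNJE A⟩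
  have hGrS : ∀ A : Finset α, SatR M q G A (Gr M q G A) := Gr_Sat hG
  have hCGr : ∀ A : Finset α, C A = Gr M q G A :=
    fun A => Sat_unique (hSat A) (hGrS A)
  constructor
  · intro A B
    have hsub : C (A ∪ B) ⊆ C A ∪ B := by
      intro x hx
      rcases Finset.mem_union.1 (hC _ hx) with h | h
      · apply Finset.mem_union_left
        rw [hCGr A]
        rw [hCGr (A ∪ B)] at hx
        exact Gr_subst hG Finset.subset_union_left x hx h
      · exact Finset.mem_union_right _ h
    have hZ2 : C A ∪ B ⊆ A ∪ B :=
      Finset.union_subset ((hC A).trans Finset.subset_union_left)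
        Finset.subset_union_right
    have hSatZ : SatR M q G (C A ∪ B) (C (A ∪ B)) :=
      Sat_shrink (hSat (A ∪ B)) hsub hZ2
    exact (Sat_unique (hSat (C A ∪ B)) hSatZ).symm
  · intro A B hAB
    rw [hNW A, hNW B]
    exact min_le_min (Finset.card_le_card hAB) le_rfl
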